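/- In the example network (the path a — b — c with V_src = {a,c}, V_ld = {b}, α = 1), with defense V_d = ∅ one has p(∅,∅) = 0, p({b},∅) = 1, p({a,c},∅) = 1 and p({a,b,c},∅) = 1. Hence p({a,b,c},∅) − p({a,c},∅) < p({b},∅) − p(∅,∅), so the map V_a ↦ p(V_a,∅) is not supermodular. Together with the failure of submodularity, the payoff with the defender's strategy fixed is neither submodular nor supermodular. -/

import Mathlib

open scoped Classical

noncomputable section

variable {V : Type*} [Fintype V] [DecidableEq V]

/-- The number of shortest paths between `s` and `t` in `G` (σ_G(s,t)). -/
def numSP (G : SimpleGraph V) (s t : V) : ℕ :=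
  Nat.card {w : G.Walk s t // w.length = G.dist s t}

/-- The number of shortest paths between `s` and `t` in `G` passing through edge `e`
(σ_G(s,t | e)). -/
def numSPthru (G : SimpleGraph V) (s t : V) (e : Sym2 V) : ℕ :=
  Nat.card {w : G.Walk s t // w.length = G.dist s t ∧ e ∈ w.edges}

/-- `N_G(t)`: the vertices of `Vsrc \ {t}` reachable from `t` in `G` at minimum distance
from `t`. -/
def nearestSources (Vsrc : Finset V) (G : SimpleGraph V) (t : V) : Finset V :=
  ((Vsrc.erase t).filter (fun s => G.Reachable t s)).filter
    (fun s => ∀ s' ∈ (Vsrc.erase t).filter (fun s'' => G.Reachable t s''),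
      G.dist t s ≤ G.dist t s')

/-- The load of edge `e` in `G`:
`load_G(e) = Σ_{t ∈ Vld} Σ_{s ∈ N_G(t)} σ_G(s,t|e) / (|N_G(t)|·σ_G(s,t))`. -/
def eload (Vsrc Vld : Finset V) (G : SimpleGraph V) (e : Sym2 V) : ℝ :=
  ∑ t ∈ Vld, ∑ s ∈ nearestSources Vsrc G t,
    (numSPthru G s t e : ℝ) / (((nearestSources Vsrc G t).card : ℝ) * (numSP G s t : ℝ))

/-- The failure operator: removes every edge whose current load exceeds its capacity
`c_e = (1+α)·load_{G₀}(e)`. -/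
def Fop (Vsrc Vld : Finset V) (G0 : SimpleGraph V) (α : ℝ) (G : SimpleGraph V) :
    SimpleGraph V where
  Adj u v := G.Adj u v ∧ eload Vsrc Vld G s(u, v) ≤ (1 + α) * eload Vsrc Vld G0 s(u, v)
  symm := by
    constructor
    intro u v h
    refine ⟨h.1.symm, ?_⟩
    rw [Sym2.eq_swap]
    exact h.2
  loopless := ⟨fun v h => G.irrefl h.1⟩

/-- `F*(G)`: the fixed point reached by iterating the failure operator (reached after at
most `|E|+1 ≤ (card V)^2` applications, since each non-trivial application removes an edge). -/
def Fstar (Vsrc Vld : Finset V) (G0 : SimpleGraph V) (α : ℝ) (G : SimpleGraph V) :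
    SimpleGraph V :=
  (Fop Vsrc Vld G0 α)^[Fintype.card V ^ 2] G

/-- `G − S`: the (induced) subgraph obtained by deleting the vertices of `S`. -/
def deleteVerts (G : SimpleGraph V) (S : Finset V) : SimpleGraph V where
  Adj u v := G.Adj u v ∧ u ∉ S ∧ v ∉ S
  symm := ⟨fun u v h => ⟨h.1.symm, h.2.2, h.2.1⟩⟩
  loopless := ⟨fun v h => G.irrefl h.1⟩

/-- `disc(G)`: the number of load nodes from which no source (other than itself) is
reachable in `G`. -/
def disc (Vsrc Vld : Finset V) (G : SimpleGraph V) : ℕ :=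
  (Vld.filter (fun t => ∀ s ∈ Vsrc, s ≠ t → ¬ G.Reachable t s)).card

/-- The payoff `p(V_a,V_d) = disc(F*(G₀ − (V_a \ V_d)))`. -/
def payoff (Vsrc Vld : Finset V) (G0 : SimpleGraph V) (α : ℝ) (Va Vd : Finset V) : ℕ :=
  disc Vsrc Vld (Fstar Vsrc Vld G0 α (deleteVerts G0 (Va \ Vd)))

/-- `f` is submodular: adding an element to a larger set yields a smaller increment. -/
def IsSubmodular {β : Type*} [DecidableEq β] (f : Finset β → ℤ) : Prop :=
  ∀ ⦃S1 S2 : Finset β⦄, S1 ⊆ S2 → ∀ s ∉ S2,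
    f (insert s S2) - f S2 ≤ f (insert s S1) - f S1

/-- `f` is supermodular: adding an element to a larger set yields a larger increment. -/
def IsSupermodular {β : Type*} [DecidableEq β] (f : Finset β → ℤ) : Prop :=
  ∀ ⦃S1 S2 : Finset β⦄, S1 ⊆ S2 → ∀ s ∉ S2,
    f (insert s S1) - f S1 ≤ f (insert s S2) - f S2



namespace PathEx

open SimpleGraph

variable {V : Type*} [Fintype V] [DecidableEq V]

lemma walk_length_one_eq {G : SimpleGraph V} {u v : V} (w : G.Walk u v) (hw : w.length = 1) :
    ∃ h : G.Adj u v, w = SimpleGraph.Walk.cons h SimpleGraph.Walk.nil := by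
  cases w with
  | nil => simp at hw
  | cons h p =>
    cases p with
    | nil => exact ⟨h, rfl⟩
    | cons h' q => simp [SimpleGraph.Walk.length_cons] at hw

lemma numSP_adj {G : SimpleGraph V} {u v : V} (h : G.Adj u v) : numSP G u v = 1 := by
  have hd : G.dist u v = 1 := SimpleGraph.dist_eq_one_iff_adj.2 h
  rw [numSP, hd, Nat.card_eq_one_iff_unique]
  constructor
  · constructor
    rintro ⟨w1, h1⟩ ⟨w2, h2⟩
    obtain ⟨ha1, rfl⟩ := walk_length_one_eq w1 h1
    obtain ⟨ha2, rfl⟩ := walk_length_one_eq w2 h2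
    rfl
  · exact ⟨⟨SimpleGraph.Walk.cons h SimpleGraph.Walk.nil, by simp⟩⟩

lemma numSPthru_adj {G : SimpleGraph V} {u v : V} (h : G.Adj u v) (e : Sym2 V) :
    numSPthru G u v e = if e = s(u, v) then 1 else 0 := by
  have hd : G.dist u v = 1 := SimpleGraph.dist_eq_one_iff_adj.2 h
  rw [numSPthru, hd]
  split
  · next he =>
    rw [Nat.card_eq_one_iff_unique]
    constructor
    · constructor
      rintro ⟨w1, h1, _⟩ ⟨w2, h2, _⟩
      obtain ⟨ha1, rfl⟩ := walk_length_one_eq w1 h1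
      obtain ⟨ha2, rfl⟩ := walk_length_one_eq w2 h2
      rfl
    · exact ⟨⟨SimpleGraph.Walk.cons h SimpleGraph.Walk.nil, by simp, by simp [he]⟩⟩
  · next he =>
    have : IsEmpty {w : G.Walk u v // w.length = 1 ∧ e ∈ w.edges} := by
      constructor
      rintro ⟨w, hl, hm⟩
      obtain ⟨ha, rfl⟩ := walk_length_one_eq w hl
      simp [SimpleGraph.Walk.edges_cons] at hm
      exact he hm
    exact Nat.card_of_isEmpty

lemma not_reachable_isolated {G : SimpleGraph V} {x u : V} (hx : ∀ y, ¬ G.Adj x y)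
    (h : u ≠ x) : ¬ G.Reachable u x := by
  intro hr
  obtain ⟨w⟩ := hr.symm
  cases w with
  | nil => exact h rfl
  | cons ha p => exact hx _ ha

lemma eload_nonneg (Vsrc Vld : Finset V) (G : SimpleGraph V) (e : Sym2 V) :
    0 ≤ eload Vsrc Vld G e := by
  apply Finset.sum_nonneg; intro t _
  apply Finset.sum_nonneg; intro s _
  positivity

lemma Fop_self (Vsrc Vld : Finset V) (G0 : SimpleGraph V) :
    Fop Vsrc Vld G0 1 G0 = G0 := by
  ext u v
  simp only [Fop]
  constructor
  · rintro ⟨h, -⟩; exact h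
  · intro h
    refine ⟨h, ?_⟩
    have := eload_nonneg Vsrc Vld G0 s(u, v)
    linarith

lemma Fop_bot (Vsrc Vld : Finset V) (G0 : SimpleGraph V) (α : ℝ) :
    Fop Vsrc Vld G0 α ⊥ = ⊥ := by
  ext u v
  simp [Fop]

lemma Fstar_fixed {Vsrc Vld : Finset V} {G0 : SimpleGraph V} {α : ℝ} {G : SimpleGraph V}
    (h : Fop Vsrc Vld G0 α G = G) : Fstar Vsrc Vld G0 α G = G :=
  Function.iterate_fixed h _

end PathEx

namespace PathEx

open SimpleGraph

abbrev P3 : SimpleGraph (Fin 3) := SimpleGraph.pathGraph 3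

lemma adj01 : P3.Adj 0 1 := by rw [SimpleGraph.pathGraph_adj]; decide
lemma adj10 : P3.Adj 1 0 := by rw [SimpleGraph.pathGraph_adj]; decide
lemma adj12 : P3.Adj 1 2 := by rw [SimpleGraph.pathGraph_adj]; decide
lemma adj21 : P3.Adj 2 1 := by rw [SimpleGraph.pathGraph_adj]; decide

lemma NS_P3 : nearestSources {0, 2} P3 1 = {0, 2} := by
  have h0 : P3.dist 1 0 = 1 := SimpleGraph.dist_eq_one_iff_adj.2 adj10
  have h2 : P3.dist 1 2 = 1 := SimpleGraph.dist_eq_one_iff_adj.2 adj12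
  ext a
  simp only [nearestSources, Finset.mem_filter, Finset.mem_erase, Finset.mem_insert,
    Finset.mem_singleton]
  constructor
  · rintro ⟨⟨⟨-, ha⟩, -⟩, -⟩; exact ha
  · intro ha
    have hreach : P3.Reachable 1 a := by
      rcases ha with rfl | rfl
      · exact adj10.reachable
      · exact adj12.reachable
    have hne : a ≠ 1 := by rcases ha with rfl | rfl <;> decide
    refine ⟨⟨⟨hne, ha⟩, hreach⟩, ?_⟩
    rintro s' ⟨⟨-, hs'⟩, -⟩
    have hda : P3.dist 1 a = 1 := by rcases ha with rfl | rfl <;> assumption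
    have hds : P3.dist 1 s' = 1 := by rcases hs' with rfl | rfl <;> assumption
    rw [hda, hds]

lemma eload_P3_01 : eload {0, 2} {1} P3 s(0, 1) = 1 / 2 := by
  rw [eload, Finset.sum_singleton, NS_P3]
  rw [show ({0, 2} : Finset (Fin 3)) = insert 0 {2} from rfl,
    Finset.sum_insert (by decide), Finset.sum_singleton]
  rw [numSPthru_adj adj01, numSPthru_adj adj21, numSP_adj adj01, numSP_adj adj21,
    if_pos rfl, if_neg (by decide), show ({0, 2} : Finset (Fin 3)).card = 2 from rfl]
  norm_num

lemma eload_P3_12 : eload {0, 2} {1} P3 s(1, 2) = 1 / 2 := by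
  rw [eload, Finset.sum_singleton, NS_P3]
  rw [show ({0, 2} : Finset (Fin 3)) = insert 0 {2} from rfl,
    Finset.sum_insert (by decide), Finset.sum_singleton]
  rw [numSPthru_adj adj01, numSPthru_adj adj21, numSP_adj adj01, numSP_adj adj21,
    if_neg (by decide), if_pos (by decide), show ({0, 2} : Finset (Fin 3)).card = 2 from rfl]
  norm_num

lemma disc_P3 : disc {0, 2} {1} P3 = 0 := by
  rw [disc, Finset.filter_singleton, if_neg, Finset.card_empty]
  intro hall
  exact hall 0 (by decide) (by decide) adj10.reachable

lemma disc_bot : disc {0, 2} {1} (⊥ : SimpleGraph (Fin 3)) = 1 := by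
  rw [disc, Finset.filter_singleton, if_pos, Finset.card_singleton]
  intro s hs hne
  rw [SimpleGraph.reachable_bot]
  simp only [Finset.mem_insert, Finset.mem_singleton] at hs
  rcases hs with rfl | rfl <;> decide

lemma deleteVerts_empty : deleteVerts P3 ∅ = P3 := by
  ext u v; simp [deleteVerts]

lemma deleteVerts_eq_bot (S : Finset (Fin 3))
    (h : ∀ u v : Fin 3, ((u : ℕ) + 1 = (v : ℕ) ∨ (v : ℕ) + 1 = (u : ℕ)) → u ∈ S ∨ v ∈ S) :
    deleteVerts P3 S = ⊥ := by
  ext u v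
  simp only [deleteVerts, SimpleGraph.bot_adj, iff_false]
  rintro ⟨ha, hu, hv⟩
  rcases h u v (SimpleGraph.pathGraph_adj.1 ha) with h' | h'
  · exact hu h'
  · exact hv h'

end PathEx

namespace PathEx

open SimpleGraph

/-- Path with vertex 2 deleted: single edge 0–1. -/
abbrev G2 : SimpleGraph (Fin 3) := deleteVerts P3 {2}
/-- Path with vertex 0 deleted: single edge 1–2. -/
abbrev Gz : SimpleGraph (Fin 3) := deleteVerts P3 {0}

lemma G2_adj10 : G2.Adj 1 0 := ⟨adj10, by decide, by decide⟩
lemma G2_adj01 : G2.Adj 0 1 := ⟨adj01, by decide, by decide⟩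
lemma Gz_adj12 : Gz.Adj 1 2 := ⟨adj12, by decide, by decide⟩
lemma Gz_adj21 : Gz.Adj 2 1 := ⟨adj21, by decide, by decide⟩

lemma deleteVerts_isolated {G : SimpleGraph (Fin 3)} {S : Finset (Fin 3)} {x : Fin 3}
    (hx : x ∈ S) : ∀ y, ¬ (deleteVerts G S).Adj x y := by
  rintro y ⟨-, hu, -⟩
  exact hu hx

lemma G2_not_reach : ¬ G2.Reachable 1 2 :=
  not_reachable_isolated (deleteVerts_isolated (by decide)) (by decide)

lemma Gz_not_reach : ¬ Gz.Reachable 1 0 :=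
  not_reachable_isolated (deleteVerts_isolated (by decide)) (by decide)

lemma NS_G2 : nearestSources {0, 2} G2 1 = {0} := by
  ext a
  simp only [nearestSources, Finset.mem_filter, Finset.mem_erase, Finset.mem_insert,
    Finset.mem_singleton]
  constructor
  · rintro ⟨⟨⟨-, ha⟩, hr⟩, -⟩
    rcases ha with rfl | rfl
    · rfl
    · exact absurd hr G2_not_reach
  · rintro rfl
    refine ⟨⟨⟨by decide, Or.inl rfl⟩, G2_adj10.reachable⟩, ?_⟩
    rintro s' ⟨⟨-, hs'⟩, hr⟩
    rcases hs' with rfl | rfl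
    · exact le_refl _
    · exact absurd hr G2_not_reach

lemma NS_Gz : nearestSources {0, 2} Gz 1 = {2} := by
  ext a
  simp only [nearestSources, Finset.mem_filter, Finset.mem_erase, Finset.mem_insert,
    Finset.mem_singleton]
  constructor
  · rintro ⟨⟨⟨-, ha⟩, hr⟩, -⟩
    rcases ha with rfl | rfl
    · exact absurd hr Gz_not_reach
    · rfl
  · rintro rfl
    refine ⟨⟨⟨by decide, Or.inr rfl⟩, Gz_adj12.reachable⟩, ?_⟩
    rintro s' ⟨⟨-, hs'⟩, hr⟩
    rcases hs' with rfl | rfl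
    · exact absurd hr Gz_not_reach
    · exact le_refl _

lemma eload_G2 : eload {0, 2} {1} G2 s(0, 1) = 1 := by
  rw [eload, Finset.sum_singleton, NS_G2, Finset.sum_singleton]
  rw [numSPthru_adj G2_adj01, numSP_adj G2_adj01, if_pos rfl,
    show ({0} : Finset (Fin 3)).card = 1 from rfl]
  norm_num

lemma eload_Gz : eload {0, 2} {1} Gz s(1, 2) = 1 := by
  rw [eload, Finset.sum_singleton, NS_Gz, Finset.sum_singleton]
  rw [numSPthru_adj Gz_adj21, numSP_adj Gz_adj21, if_pos (by decide),
    show ({2} : Finset (Fin 3)).card = 1 from rfl]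
  norm_num

lemma G2_sym2 : ∀ u v : Fin 3, G2.Adj u v → s(u, v) = s(0, 1) := by
  rintro u v ⟨ha, hu, hv⟩
  have h' := SimpleGraph.pathGraph_adj.1 ha
  clear ha
  revert h' hu hv
  revert u v
  decide

lemma Gz_sym2 : ∀ u v : Fin 3, Gz.Adj u v → s(u, v) = s(1, 2) := by
  rintro u v ⟨ha, hu, hv⟩
  have h' := SimpleGraph.pathGraph_adj.1 ha
  clear ha
  revert h' hu hv
  revert u v
  decide

lemma Fop_G2 : Fop {0, 2} {1} P3 1 G2 = G2 := by
  ext u v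
  simp only [Fop]
  constructor
  · rintro ⟨h, -⟩; exact h
  · intro h
    refine ⟨h, ?_⟩
    rw [G2_sym2 u v h, eload_G2, eload_P3_01]
    norm_num

lemma Fop_Gz : Fop {0, 2} {1} P3 1 Gz = Gz := by
  ext u v
  simp only [Fop]
  constructor
  · rintro ⟨h, -⟩; exact h
  · intro h
    refine ⟨h, ?_⟩
    rw [Gz_sym2 u v h, eload_Gz, eload_P3_12]
    norm_num

lemma disc_G2 : disc {0, 2} {1} G2 = 0 := by
  rw [disc, Finset.filter_singleton, if_neg, Finset.card_empty]
  intro hall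
  exact hall 0 (by decide) (by decide) G2_adj10.reachable

lemma disc_Gz : disc {0, 2} {1} Gz = 0 := by
  rw [disc, Finset.filter_singleton, if_neg, Finset.card_empty]
  intro hall
  exact hall 2 (by decide) (by decide) Gz_adj12.reachable

lemma payoff_empty : payoff {0, 2} {1} P3 1 ∅ ∅ = 0 := by
  rw [payoff, Finset.sdiff_empty, deleteVerts_empty, Fstar_fixed (Fop_self _ _ _), disc_P3]

lemma payoff_b : payoff {0, 2} {1} P3 1 {1} ∅ = 1 := by
  rw [payoff, Finset.sdiff_empty, deleteVerts_eq_bot {1} (by decide),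
    Fstar_fixed (Fop_bot _ _ _ _), disc_bot]

lemma payoff_ac : payoff {0, 2} {1} P3 1 {0, 2} ∅ = 1 := by
  rw [payoff, Finset.sdiff_empty, deleteVerts_eq_bot {0, 2} (by decide),
    Fstar_fixed (Fop_bot _ _ _ _), disc_bot]

lemma payoff_abc : payoff {0, 2} {1} P3 1 {0, 1, 2} ∅ = 1 := by
  rw [payoff, Finset.sdiff_empty, deleteVerts_eq_bot {0, 1, 2} (by decide),
    Fstar_fixed (Fop_bot _ _ _ _), disc_bot]

lemma payoff_a : payoff {0, 2} {1} P3 1 {0} ∅ = 0 := by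
  rw [payoff, Finset.sdiff_empty]
  rw [show deleteVerts P3 {0} = Gz from rfl, Fstar_fixed Fop_Gz, disc_Gz]

lemma payoff_c : payoff {0, 2} {1} P3 1 {2} ∅ = 0 := by
  rw [payoff, Finset.sdiff_empty]
  rw [show deleteVerts P3 {2} = G2 from rfl, Fstar_fixed Fop_G2, disc_G2]

end PathEx

/-- In the path `a — b — c` (vertices `0,1,2` of `Fin 3`) with `V_src = {a,c}`,
`V_ld = {b}` and `α = 1`, with defense `V_d = ∅` one has `p(∅,∅) = 0`, `p({b},∅) = 1`,
`p({a,c},∅) = 1` and `p({a,b,c},∅) = 1`; hence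
`p({a,b,c},∅) − p({a,c},∅) < p({b},∅) − p(∅,∅)`, so `V_a ↦ p(V_a,∅)` is not
supermodular.  Together with the failure of submodularity, the payoff with the defender's
strategy fixed is neither submodular nor supermodular. -/
theorem path_example_not_supermodular_in_attack :
    payoff ({0, 2} : Finset (Fin 3)) ({1} : Finset (Fin 3)) (SimpleGraph.pathGraph 3) 1 ∅ ∅ = 0 ∧
    payoff ({0, 2} : Finset (Fin 3)) ({1} : Finset (Fin 3)) (SimpleGraph.pathGraph 3) 1 {1} ∅ = 1 ∧
    payoff ({0, 2} : Finset (Fin 3)) ({1} : Finset (Fin 3)) (SimpleGraph.pathGraph 3) 1 {0, 2} ∅ = 1 ∧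
    payoff ({0, 2} : Finset (Fin 3)) ({1} : Finset (Fin 3)) (SimpleGraph.pathGraph 3) 1 {0, 1, 2} ∅ = 1 ∧
    ((payoff ({0, 2} : Finset (Fin 3)) ({1} : Finset (Fin 3)) (SimpleGraph.pathGraph 3) 1 {0, 1, 2} ∅ : ℤ) - (payoff ({0, 2} : Finset (Fin 3)) ({1} : Finset (Fin 3)) (SimpleGraph.pathGraph 3) 1 {0, 2} ∅ : ℤ) <
      (payoff ({0, 2} : Finset (Fin 3)) ({1} : Finset (Fin 3)) (SimpleGraph.pathGraph 3) 1 {1} ∅ : ℤ) - (payoff ({0, 2} : Finset (Fin 3)) ({1} : Finset (Fin 3)) (SimpleGraph.pathGraph 3) 1 ∅ ∅ : ℤ)) ∧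
    ¬ IsSupermodular (fun Va : Finset (Fin 3) => (payoff ({0, 2} : Finset (Fin 3)) ({1} : Finset (Fin 3)) (SimpleGraph.pathGraph 3) 1 Va ∅ : ℤ)) ∧
    ¬ (∀ Vd : Finset (Fin 3), IsSubmodular (fun Va : Finset (Fin 3) => (payoff ({0, 2} : Finset (Fin 3)) ({1} : Finset (Fin 3)) (SimpleGraph.pathGraph 3) 1 Va Vd : ℤ))) ∧
    ¬ (∀ Vd : Finset (Fin 3), IsSupermodular (fun Va : Finset (Fin 3) => (payoff ({0, 2} : Finset (Fin 3)) ({1} : Finset (Fin 3)) (SimpleGraph.pathGraph 3) 1 Va Vd : ℤ))) := by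
  have e1 : insert (1 : Fin 3) (∅ : Finset (Fin 3)) = {1} := by decide
  have e2 : insert (1 : Fin 3) ({0, 2} : Finset (Fin 3)) = {0, 1, 2} := by decide
  have e3 : insert (2 : Fin 3) ({0} : Finset (Fin 3)) = {0, 2} := by decide
  have e4 : insert (2 : Fin 3) (∅ : Finset (Fin 3)) = {2} := by decide
  have hsuper : ¬ IsSupermodular (fun Va : Finset (Fin 3) =>
      (payoff ({0, 2} : Finset (Fin 3)) ({1} : Finset (Fin 3)) (SimpleGraph.pathGraph 3) 1 Va ∅ : ℤ)) := by
    intro h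
    have := h (Finset.empty_subset ({0, 2} : Finset (Fin 3))) 1 (by decide)
    simp only [e1, e2] at this
    rw [PathEx.payoff_b, PathEx.payoff_empty, PathEx.payoff_abc, PathEx.payoff_ac] at this
    norm_num at this
  refine ⟨PathEx.payoff_empty, PathEx.payoff_b, PathEx.payoff_ac, PathEx.payoff_abc, ?_, hsuper, ?_, ?_⟩
  · rw [PathEx.payoff_b, PathEx.payoff_empty, PathEx.payoff_abc, PathEx.payoff_ac]; norm_num
  · intro h
    have := h ∅ (Finset.empty_subset ({0} : Finset (Fin 3))) 2 (by decide)
    simp only [e3, e4] at this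
    rw [PathEx.payoff_ac, PathEx.payoff_a, PathEx.payoff_c, PathEx.payoff_empty] at this
    norm_num at this
  · intro h
    exact hsuper (h ∅)

end
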